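/- Let k be a field of characteristic zero and n ≥ 1. There is a unique k-algebra homomorphism ι* : Aₙ → Aₙ with ι*(a₀) = 0, ι*(a_i) = a_{i−1} for all i ≥ 1, ι*(b₁) = b₁ + 1, and ι*(b_j) = b_j for 2 ≤ j ≤ n (in particular these assignments respect the defining relations of Aₙ). Moreover ι* is surjective and its kernel is the principal ideal a₀·Aₙ. (This expresses that the shift map ι : Z^{≤n} → Z^{≤n}, (L, ∇, s) ↦ (L(1), ∇, s), is a closed embedding, cut out by the single equation a₀ = 0, and hence is almost finitely presented, as in Proposition 2.20(3) and Corollary 2.23.) -/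

import Mathlib

set_option maxHeartbeats 1000000
set_option synthInstance.maxHeartbeats 200000


open MvPolynomial

/-- The variable `a_l` for `l : ℤ`, with the convention `a_l = 0` for `l < 0`.
Here `a_i = X (Sum.inl i)`, and the variable `b_j` (for `1 ≤ j ≤ n`) is
`X (Sum.inr ⟨j−1⟩)`. -/
noncomputable def aVar (k : Type) [Field k] (n : ℕ) (l : ℤ) :
    MvPolynomial (ℕ ⊕ Fin n) k :=
  if 0 ≤ l then X (Sum.inl l.toNat) else 0

/-- The relation `r_m = ∑_{j=1}^{n} a_{m+j} b_j − (m+1) a_{m+1}` (with `a_l = 0` for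
`l < 0`), for `m : ℤ`, `m ≥ −n`: equating coefficients of `t^m dt` in
`∑ i a_i t^{i−1} dt = (∑ a_i t^i)·(∑_{j=1}^n b_j t^{−j} dt)`. -/
noncomputable def relA (k : Type) [Field k] (n : ℕ) (m : ℤ) :
    MvPolynomial (ℕ ⊕ Fin n) k :=
  (∑ j : Fin n, aVar k n (m + (j.1 + 1)) * X (Sum.inr j)) - (m + 1) • aVar k n (m + 1)

/-- `Aₙ`: the commutative `k`-algebra with generators `a₀, a₁, …` and `b₁, …, bₙ` and
relations `r_m = 0` for all integers `m ≥ −n`. -/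
noncomputable abbrev AAlg (k : Type) [Field k] (n : ℕ) : Type :=
  MvPolynomial (ℕ ⊕ Fin n) k ⧸
    Ideal.span (Set.range fun m : {m : ℤ // -(n : ℤ) ≤ m} => relA k n m.1)

/-- The generator `a_i` of `Aₙ`. -/
noncomputable def aA (k : Type) [Field k] (n : ℕ) (i : ℕ) : AAlg k n :=
  Ideal.Quotient.mk _ (X (Sum.inl i))

/-- The generator `b_{j+1}` of `Aₙ` (for `j : Fin n`). -/
noncomputable def bA (k : Type) [Field k] (n : ℕ) (j : Fin n) : AAlg k n :=
  Ideal.Quotient.mk _ (X (Sum.inr j))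

section Aux
variable (k : Type) [Field k] (n : ℕ)

noncomputable def shiftF : ℕ ⊕ Fin n → MvPolynomial (ℕ ⊕ Fin n) k
  | .inl 0 => 0
  | .inl (i+1) => X (.inl i)
  | .inr j => if j.1 = 0 then X (.inr j) + 1 else X (.inr j)

noncomputable def PhiP : MvPolynomial (ℕ ⊕ Fin n) k →ₐ[k] MvPolynomial (ℕ ⊕ Fin n) k :=
  aeval (shiftF k n)

noncomputable def unshiftF : ℕ ⊕ Fin n → MvPolynomial (ℕ ⊕ Fin n) k
  | .inl i => X (.inl (i+1))
  | .inr j => if j.1 = 0 then X (.inr j) - 1 else X (.inr j)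

noncomputable def PsiP : MvPolynomial (ℕ ⊕ Fin n) k →ₐ[k] MvPolynomial (ℕ ⊕ Fin n) k :=
  aeval (unshiftF k n)

lemma PhiP_aVar (l : ℤ) : PhiP k n (aVar k n l) = aVar k n (l - 1) := by
  rcases lt_trichotomy l 0 with h | h | h
  · rw [aVar, aVar, if_neg (by omega), if_neg (by omega), map_zero]
  · subst h
    simp [aVar, PhiP, shiftF]
  · have h1 : l.toNat = (l-1).toNat + 1 := by omega
    rw [aVar, aVar, if_pos (by omega), if_pos (by omega), h1]
    simp [PhiP, shiftF]

lemma PhiP_relA (hn : 1 ≤ n) (m : ℤ) :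
    PhiP k n (relA k n m) = relA k n (m - 1) := by
  rw [relA, relA, map_sub, map_sum, map_zsmul, PhiP_aVar]
  have h1 : ∀ j : Fin n, PhiP k n (aVar k n (m + (j.1 + 1)) * X (Sum.inr j)) =
      aVar k n (m - 1 + (j.1 + 1)) * X (Sum.inr j)
        + if j = (⟨0, hn⟩ : Fin n) then aVar k n m else 0 := by
    intro j
    rw [map_mul, PhiP_aVar]
    have h2 : PhiP k n (X (Sum.inr j) : MvPolynomial (ℕ ⊕ Fin n) k) =
        if j.1 = 0 then X (Sum.inr j) + 1 else X (Sum.inr j) := by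
      simp [PhiP, shiftF]
    rw [h2]
    have h3 : m + (↑j.1 + 1) - 1 = m - 1 + (↑j.1 + 1) := by ring
    rw [h3]
    by_cases h : j.1 = 0
    · rw [if_pos h, if_pos (by ext; exact h)]
      have : (j.1 : ℤ) = 0 := by exact_mod_cast h
      rw [mul_add, mul_one]
      congr 1
      rw [this]; congr 1; ring
    · rw [if_neg h, if_neg (by intro hj; apply h; rw [hj])]
      rw [add_zero]
  rw [Finset.sum_congr rfl (fun j _ => h1 j), Finset.sum_add_distrib,
    Finset.sum_ite_eq' Finset.univ (⟨0, hn⟩ : Fin n) (fun _ => aVar k n m),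
    if_pos (Finset.mem_univ _)]
  have h4 : m - 1 + 1 = m := by ring
  have h4' : m + 1 - 1 = m := by ring
  rw [h4, h4']
  have h5 : (m + 1) • aVar k n m = m • aVar k n m + aVar k n m := by
    rw [add_smul, one_smul]
  rw [h5]
  abel

lemma relA_eq_zero (hn : 1 ≤ n) (m : ℤ) (h : m < -(n : ℤ)) : relA k n m = 0 := by
  rw [relA]
  rw [Finset.sum_eq_zero (fun j _ => by
    rw [aVar, if_neg (by have := j.2; omega), zero_mul]),
    aVar, if_neg (by omega), smul_zero, sub_zero]

noncomputable abbrev IdI : Ideal (MvPolynomial (ℕ ⊕ Fin n) k) :=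
  Ideal.span (Set.range fun m : {m : ℤ // -(n : ℤ) ≤ m} => relA k n m.1)

lemma mk_relA (m : ℤ) (h : -(n : ℤ) ≤ m) :
    Ideal.Quotient.mk (IdI k n) (relA k n m) = 0 :=
  Ideal.Quotient.eq_zero_iff_mem.2 (Ideal.subset_span ⟨⟨m, h⟩, rfl⟩)


lemma aA_eq (i : ℕ) : aA k n i = Ideal.Quotient.mk (IdI k n) (X (Sum.inl i)) := rfl
lemma bA_eq (j : Fin n) : bA k n j = Ideal.Quotient.mk (IdI k n) (X (Sum.inr j)) := rfl

lemma PhiP_killed (hn : 1 ≤ n) :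
    ∀ a ∈ IdI k n, ((Ideal.Quotient.mkₐ k (IdI k n)).comp (PhiP k n)) a = 0 := by
  intro a ha
  have hle : IdI k n ≤
      RingHom.ker (((Ideal.Quotient.mkₐ k (IdI k n)).comp (PhiP k n)) :
        MvPolynomial (ℕ ⊕ Fin n) k →+* AAlg k n) := Ideal.span_le.mpr (by
    rintro x ⟨⟨m, hm⟩, rfl⟩
    rw [SetLike.mem_coe, RingHom.mem_ker]
    show Ideal.Quotient.mk (IdI k n) (PhiP k n (relA k n m)) = 0
    rw [PhiP_relA k n hn]
    rcases le_or_gt (-(n : ℤ)) (m - 1) with h | h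
    · exact mk_relA k n _ h
    · rw [relA_eq_zero k n hn _ h, map_zero])
  exact RingHom.mem_ker.mp (hle ha)

noncomputable def iotaF (hn : 1 ≤ n) : AAlg k n →ₐ[k] AAlg k n :=
  Ideal.Quotient.liftₐ (IdI k n)
    ((Ideal.Quotient.mkₐ k (IdI k n)).comp (PhiP k n)) (PhiP_killed k n hn)

lemma iotaF_mk (hn : 1 ≤ n) (p : MvPolynomial (ℕ ⊕ Fin n) k) :
    iotaF k n hn (Ideal.Quotient.mk (IdI k n) p) =
      Ideal.Quotient.mk (IdI k n) (PhiP k n p) := rfl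

noncomputable abbrev JId : Ideal (AAlg k n) := Ideal.span {aA k n 0}

noncomputable def qz : MvPolynomial (ℕ ⊕ Fin n) k →ₐ[k] (AAlg k n ⧸ JId k n) :=
  (Ideal.Quotient.mkₐ k (JId k n)).comp (Ideal.Quotient.mkₐ k (IdI k n))

lemma qz_apply (p : MvPolynomial (ℕ ⊕ Fin n) k) :
    qz k n p = Ideal.Quotient.mk (JId k n) (Ideal.Quotient.mk (IdI k n) p) := rfl

lemma qz_Psi_aVar (l : ℤ) :
    qz k n (PsiP k n (aVar k n l)) = qz k n (aVar k n (l + 1)) := by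
  rcases lt_trichotomy l (-1) with h | h | h
  · rw [aVar, aVar, if_neg (by omega), if_neg (by omega), map_zero, map_zero]
  · subst h
    rw [aVar, aVar, if_neg (by omega), if_pos (by omega), map_zero, map_zero]
    show (0 : AAlg k n ⧸ JId k n) = Ideal.Quotient.mk (JId k n) (aA k n 0)
    rw [Ideal.Quotient.eq_zero_iff_mem.2 (Ideal.mem_span_singleton_self _)]
  · have h0 : (0 : ℤ) ≤ l := by omega
    rw [aVar, aVar, if_pos h0, if_pos (by omega)]
    have h1 : (l + 1).toNat = l.toNat + 1 := by omega
    rw [h1]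
    congr 1
    simp [PsiP, unshiftF]

set_option maxHeartbeats 1000000 in
lemma qz_Psi_relA (hn : 1 ≤ n) (m : ℤ) (hm : -(n : ℤ) ≤ m) :
    qz k n (PsiP k n (relA k n m)) = 0 := by
  have key : qz k n (relA k n (m + 1)) = 0 := by
    rw [qz_apply, mk_relA k n _ (by omega), map_zero]
  have hb : ∀ j : Fin n, qz k n (PsiP k n (X (Sum.inr j))) =
      qz k n (X (Sum.inr j)) - (if j = (⟨0, hn⟩ : Fin n) then 1 else 0) := by
    intro j
    by_cases h : j.1 = 0
    · rw [if_pos (by ext; exact h)]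
      have : PsiP k n (X (Sum.inr j) : MvPolynomial (ℕ ⊕ Fin n) k) = X (Sum.inr j) - 1 := by
        simp [PsiP, unshiftF, h]
      rw [this, map_sub, map_one]
    · rw [if_neg (by intro hj; apply h; rw [hj]), sub_zero]
      have : PsiP k n (X (Sum.inr j) : MvPolynomial (ℕ ⊕ Fin n) k) = X (Sum.inr j) := by
        simp [PsiP, unshiftF, h]
      rw [this]
  have hterm : ∀ j : Fin n,
      qz k n (PsiP k n (aVar k n (m + (j.1 + 1)) * X (Sum.inr j))) =
      qz k n (aVar k n (m + 1 + (j.1 + 1))) * qz k n (X (Sum.inr j))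
        - (if j = (⟨0, hn⟩ : Fin n) then qz k n (aVar k n (m + 1 + 1)) else 0) := by
    intro j
    rw [map_mul, map_mul, qz_Psi_aVar, hb j, mul_sub (α := AAlg k n ⧸ JId k n), mul_ite, mul_one (M := AAlg k n ⧸ JId k n), mul_zero (M₀ := AAlg k n ⧸ JId k n)]
    have h1 : m + (↑j.1 + 1) + 1 = m + 1 + (↑j.1 + 1) := by ring
    rw [h1]
    congr 1
    split_ifs with h
    · subst h
      norm_num
    · rfl
  rw [relA, map_sub, map_sub, map_sum, map_sum, map_zsmul, map_zsmul,
    Finset.sum_congr rfl (fun j _ => hterm j), Finset.sum_sub_distrib,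
    Finset.sum_ite_eq' Finset.univ (⟨0, hn⟩ : Fin n)
      (fun _ => qz k n (aVar k n (m + 1 + 1))),
    if_pos (Finset.mem_univ _), qz_Psi_aVar]
  rw [relA, map_sub, map_sum, map_zsmul] at key
  simp only [map_mul] at key
  have h3 := sub_eq_zero.mp key
  rw [sub_sub, h3, ← sub_eq_zero]
  rw [show (m + 1 + 1 : ℤ) = 1 + (m + 1) by ring, add_smul, one_smul]
  abel

lemma PsiP_killed (hn : 1 ≤ n) :
    ∀ a ∈ IdI k n, ((qz k n).comp (PsiP k n)) a = 0 := by
  intro a ha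
  have hle : IdI k n ≤
      RingHom.ker (((qz k n).comp (PsiP k n)) :
        MvPolynomial (ℕ ⊕ Fin n) k →+* (AAlg k n ⧸ JId k n)) := Ideal.span_le.mpr (by
    rintro x ⟨⟨m, hm⟩, rfl⟩
    rw [SetLike.mem_coe, RingHom.mem_ker]
    exact qz_Psi_relA k n hn m hm)
  exact RingHom.mem_ker.mp (hle ha)

noncomputable def psiQ (hn : 1 ≤ n) : AAlg k n →ₐ[k] (AAlg k n ⧸ JId k n) :=
  Ideal.Quotient.liftₐ (IdI k n) ((qz k n).comp (PsiP k n)) (PsiP_killed k n hn)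

lemma psiQ_mk (hn : 1 ≤ n) (p : MvPolynomial (ℕ ⊕ Fin n) k) :
    psiQ k n hn (Ideal.Quotient.mk (IdI k n) p) = qz k n (PsiP k n p) := rfl

lemma psi_iota (hn : 1 ≤ n) :
    (psiQ k n hn).comp (iotaF k n hn) = Ideal.Quotient.mkₐ k (JId k n) := by
  apply Ideal.Quotient.algHom_ext
  apply MvPolynomial.algHom_ext
  intro s
  simp only [AlgHom.comp_apply, Ideal.Quotient.mkₐ_eq_mk]
  show psiQ k n hn (iotaF k n hn (Ideal.Quotient.mk (IdI k n) (X s))) =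
    Ideal.Quotient.mk (JId k n) (Ideal.Quotient.mk (IdI k n) (X s))
  rw [iotaF_mk, psiQ_mk]
  obtain (i | j) := s
  · cases i with
    | zero =>
        have h1 : PhiP k n (X (Sum.inl 0) : MvPolynomial (ℕ ⊕ Fin n) k) = 0 := by
          simp [PhiP, shiftF]
        rw [h1, map_zero, map_zero]
        rw [show (Ideal.Quotient.mk (IdI k n) (X (Sum.inl 0)) : AAlg k n) = aA k n 0 from rfl]
        exact (Ideal.Quotient.eq_zero_iff_mem.2 (Ideal.mem_span_singleton_self _)).symm
    | succ i =>
        have h1 : PhiP k n (X (Sum.inl (i + 1)) : MvPolynomial (ℕ ⊕ Fin n) k) =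
            X (Sum.inl i) := by simp [PhiP, shiftF]
        have h2 : PsiP k n (X (Sum.inl i) : MvPolynomial (ℕ ⊕ Fin n) k) =
            X (Sum.inl (i + 1)) := by simp [PsiP, unshiftF]
        rw [h1, h2, qz_apply]
  · by_cases h : j.1 = 0
    · have h1 : PhiP k n (X (Sum.inr j) : MvPolynomial (ℕ ⊕ Fin n) k) =
          X (Sum.inr j) + 1 := by simp [PhiP, shiftF, h]
      have h2 : PsiP k n (X (Sum.inr j) + 1 : MvPolynomial (ℕ ⊕ Fin n) k) =
          X (Sum.inr j) := by simp [PsiP, unshiftF, h]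
      rw [h1, h2, qz_apply]
    · have h1 : PhiP k n (X (Sum.inr j) : MvPolynomial (ℕ ⊕ Fin n) k) =
          X (Sum.inr j) := by simp [PhiP, shiftF, h]
      have h2 : PsiP k n (X (Sum.inr j) : MvPolynomial (ℕ ⊕ Fin n) k) =
          X (Sum.inr j) := by simp [PsiP, unshiftF, h]
      rw [h1, h2, qz_apply]

lemma iotaF_aA0 (hn : 1 ≤ n) : iotaF k n hn (aA k n 0) = 0 := by
  rw [aA_eq, iotaF_mk]
  have h : PhiP k n (X (Sum.inl 0) : MvPolynomial (ℕ ⊕ Fin n) k) = 0 := by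
    simp [PhiP, shiftF]
  rw [h, map_zero]

lemma iotaF_aA (hn : 1 ≤ n) (i : ℕ) : iotaF k n hn (aA k n (i + 1)) = aA k n i := by
  rw [aA_eq, iotaF_mk]
  have h : PhiP k n (X (Sum.inl (i + 1)) : MvPolynomial (ℕ ⊕ Fin n) k) = X (Sum.inl i) := by
    simp [PhiP, shiftF]
  rw [h, ← aA_eq]

lemma iotaF_bA0 (hn : 1 ≤ n) :
    iotaF k n hn (bA k n ⟨0, hn⟩) = bA k n ⟨0, hn⟩ + 1 := by
  rw [bA_eq, iotaF_mk]
  have h : PhiP k n (X (Sum.inr (⟨0, hn⟩ : Fin n)) : MvPolynomial (ℕ ⊕ Fin n) k) =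
      X (Sum.inr (⟨0, hn⟩ : Fin n)) + 1 := by simp [PhiP, shiftF]
  rw [h]
  rw [map_add, map_one, ← bA_eq]

lemma iotaF_bA (hn : 1 ≤ n) (j : Fin n) (hj : 1 ≤ j.1) :
    iotaF k n hn (bA k n j) = bA k n j := by
  rw [bA_eq, iotaF_mk]
  have h : PhiP k n (X (Sum.inr j) : MvPolynomial (ℕ ⊕ Fin n) k) = X (Sum.inr j) := by
    simp [PhiP, shiftF, show j.1 ≠ 0 by omega]
  rw [h, ← bA_eq]

end Aux

/-- there is a unique `k`-algebra homomorphism `ι* : Aₙ → Aₙ` with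
`ι*(a₀) = 0`, `ι*(a_i) = a_{i−1}` for `i ≥ 1`, `ι*(b₁) = b₁ + 1` and `ι*(b_j) = b_j` for
`2 ≤ j ≤ n`; moreover it is surjective with kernel the principal ideal `a₀·Aₙ`. -/
theorem aAlg_shift_hom (k : Type) [Field k] [CharZero k] (n : ℕ) (hn : 1 ≤ n) :
    ∃ ι : AAlg k n →ₐ[k] AAlg k n,
      (ι (aA k n 0) = 0 ∧
        (∀ i : ℕ, ι (aA k n (i + 1)) = aA k n i) ∧
        ι (bA k n ⟨0, by omega⟩) = bA k n ⟨0, by omega⟩ + 1 ∧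
        (∀ j : Fin n, 1 ≤ j.1 → ι (bA k n j) = bA k n j)) ∧
      (∀ ι' : AAlg k n →ₐ[k] AAlg k n,
        (ι' (aA k n 0) = 0 ∧
          (∀ i : ℕ, ι' (aA k n (i + 1)) = aA k n i) ∧
          ι' (bA k n ⟨0, by omega⟩) = bA k n ⟨0, by omega⟩ + 1 ∧
          (∀ j : Fin n, 1 ≤ j.1 → ι' (bA k n j) = bA k n j)) → ι' = ι) ∧
      Function.Surjective ι ∧
      RingHom.ker (ι : AAlg k n →+* AAlg k n) = Ideal.span {aA k n 0} := by
  refine ⟨iotaF k n hn,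
    ⟨iotaF_aA0 k n hn, iotaF_aA k n hn, iotaF_bA0 k n hn, iotaF_bA k n hn⟩, ?_, ?_, ?_⟩
  · rintro ι' ⟨h0, h1, h2, h3⟩
    apply Ideal.Quotient.algHom_ext
    apply MvPolynomial.algHom_ext
    intro s
    simp only [AlgHom.comp_apply, Ideal.Quotient.mkₐ_eq_mk]
    obtain (i | j) := s
    · cases i with
      | zero =>
          rw [show (Ideal.Quotient.mk _ (X (Sum.inl 0)) : AAlg k n) = aA k n 0 from rfl,
            h0, iotaF_aA0]
      | succ i =>
          rw [show (Ideal.Quotient.mk _ (X (Sum.inl (i + 1))) : AAlg k n) = aA k n (i + 1)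
              from rfl, h1 i, iotaF_aA]
    · rw [show (Ideal.Quotient.mk _ (X (Sum.inr j)) : AAlg k n) = bA k n j from rfl]
      by_cases hj : j.1 = 0
      · have hj' : j = ⟨0, hn⟩ := by ext; exact hj
        rw [hj', h2, iotaF_bA0 k n hn]
      · rw [h3 j (by omega), iotaF_bA k n hn j (by omega)]
  · have hX : ∀ s, X s ∈ (PhiP k n).range := by
      rintro (i | j)
      · exact (AlgHom.mem_range _).2 ⟨X (Sum.inl (i + 1)), by simp [PhiP, shiftF]⟩
      · by_cases hj : j.1 = 0
        · have h : PhiP k n (X (Sum.inr j) - 1 : MvPolynomial (ℕ ⊕ Fin n) k) =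
              X (Sum.inr j) := by
            have h2 : PhiP k n (X (Sum.inr j) : MvPolynomial (ℕ ⊕ Fin n) k) =
                X (Sum.inr j) + 1 := by simp [PhiP, shiftF, hj]
            rw [map_sub, h2, map_one]
            ring
          exact (AlgHom.mem_range _).2 ⟨X (Sum.inr j) - 1, h⟩
        · exact (AlgHom.mem_range _).2 ⟨X (Sum.inr j), by simp [PhiP, shiftF, hj]⟩
    have hsurj : Function.Surjective (PhiP k n) := by
      rw [← AlgHom.range_eq_top]
      refine eq_top_iff.2 ?_
      rw [← MvPolynomial.adjoin_range_X]
      refine Algebra.adjoin_le ?_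
      rintro _ ⟨s, rfl⟩
      exact hX s
    intro y
    obtain ⟨p, rfl⟩ := Ideal.Quotient.mk_surjective y
    obtain ⟨q0, hq⟩ := hsurj p
    exact ⟨Ideal.Quotient.mk (IdI k n) q0, by rw [iotaF_mk, hq]⟩
  · apply le_antisymm
    · intro x hx
      have hc := DFunLike.congr_fun (psi_iota k n hn) x
      simp only [AlgHom.comp_apply, Ideal.Quotient.mkₐ_eq_mk] at hc
      rw [RingHom.mem_ker] at hx
      rw [show ((iotaF k n hn : AAlg k n →+* AAlg k n) x) = iotaF k n hn x from rfl] at hx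
      rw [hx, map_zero] at hc
      exact Ideal.Quotient.eq_zero_iff_mem.mp hc.symm
    · rw [Ideal.span_le, Set.singleton_subset_iff, SetLike.mem_coe, RingHom.mem_ker]
      exact iotaF_aA0 k n hn
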